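/- Let R be an F_p-algebra with a p-basis consisting of r elements t_1, …, t_r (so every element of R is uniquely a sum Σ x_I^p t^I over multi-indices I with 0 ≤ I < p). Then the Weil restriction along Frobenius of the affine line over R is representable by affine p^r-space: the functor sending an R-algebra S to S viewed via Frobenius is represented by R[x_I : 0 ≤ i(1),…,i(r) ≤ p−1], with universal map x ↦ Σ_I x_I^p t_1^{i(1)}⋯t_r^{i(r)}. -/

import Mathlib

open TensorProduct

/-- `FrobTwist R p` is the ring `R` viewed as an `R`-algebra through the absolute
Frobenius `R → R`, `x ↦ x^p`.  (For an `R`-algebra `S`, the ring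
`S ⊗[R] FrobTwist R p` is then the coordinate ring of the Frobenius-twisted fiber
product `Spec S ×_{Spec R, Frob} Spec R`, so that the Weil restriction along
Frobenius of an `R`-scheme `X` has `S`-points `X(S ⊗[R] FrobTwist R p)`.) -/
def FrobTwist (R : Type*) (p : ℕ) : Type _ := R

instance (R : Type*) (p : ℕ) [CommRing R] : CommRing (FrobTwist R p) :=
  inferInstanceAs (CommRing R)

noncomputable instance (R : Type*) (p : ℕ) [CommRing R] [Fact p.Prime] [CharP R p] :
    Algebra R (FrobTwist R p) :=
  (frobenius R p).toAlgebra

/-- The element of `FrobTwist R p` corresponding to `x : R`. -/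
def FrobTwist.of (R : Type*) (p : ℕ) (x : R) : FrobTwist R p := x

/-- **Weil restriction along Frobenius of the affine line.**
Let `R` be an `𝔽_p`-algebra with a `p`-basis `t_1, …, t_r`, i.e. every element of
`R` is uniquely of the form `∑_I x_I^p t^I` over multi-indices `I : Fin r → Fin p`.
Then the Weil restriction along Frobenius of the affine line over `R` is the affine
`p^r`-space `Spec R[x_I]`: for every `R`-algebra `S`, the map sending an `R`-algebra
homomorphism `φ : R[x_I] → S` to `∑_I φ(x_I) ⊗ t^I ∈ S ⊗[R] FrobTwist R p`
(the coordinate ring of the Frobenius twist `Spec S ×_{Spec R, Frob} Spec R`, whose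
elements are the `S`-points of the Weil restriction of `𝔸¹`) is a bijection, and the
universal map to `𝔸¹` is `x ↦ ∑_I x_I^p t^I`. -/
theorem stmt_7 (p : ℕ) [Fact p.Prime] (R : Type*) [CommRing R] [CharP R p]
    (r : ℕ) (t : Fin r → R)
    (hbasis : ∀ x : R, ∃! c : (Fin r → Fin p) → R,
      x = ∑ I : Fin r → Fin p, (c I) ^ p * ∏ i, t i ^ (I i : ℕ)) :
    ∀ (S : Type*) [CommRing S] [Algebra R S],
      Function.Bijective
        (fun φ : MvPolynomial (Fin r → Fin p) R →ₐ[R] S =>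
          (∑ I : Fin r → Fin p,
            φ (MvPolynomial.X I) ⊗ₜ[R] FrobTwist.of R p (∏ i, t i ^ (I i : ℕ)) :
              S ⊗[R] FrobTwist R p)) ∧
      ∀ c : (Fin r → Fin p) → S,
        MvPolynomial.aeval c
            (∑ I : Fin r → Fin p,
              (MvPolynomial.X I) ^ p * MvPolynomial.C (∏ i, t i ^ (I i : ℕ)))
          = ∑ I : Fin r → Fin p, (c I) ^ p * algebraMap R S (∏ i, t i ^ (I i : ℕ)) := by
  intro S _ _
  -- The `R`-module structure on `FrobTwist R p`: `c • x = c^p * x`.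
  have hsmul : ∀ (c x : R),
      c • FrobTwist.of R p x = FrobTwist.of R p (c ^ p * x) := by
    intro c x
    rw [Algebra.smul_def]
    show frobenius R p c * x = c ^ p * x
    rw [frobenius_def]
  set v : (Fin r → Fin p) → FrobTwist R p :=
    fun I => FrobTwist.of R p (∏ i, t i ^ (I i : ℕ)) with hv
  have hrep : ∀ x : FrobTwist R p, ∃! c : (Fin r → Fin p) → R,
      x = ∑ I, c I • v I := by
    intro x
    obtain ⟨c, hc, hcu⟩ := hbasis x
    refine ⟨c, ?_, fun y hy => hcu y ?_⟩
    · calc @Eq (FrobTwist R p) x (∑ I : Fin r → Fin p, (c I) ^ p * ∏ i, t i ^ (I i : ℕ)) := hc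
        _ = ∑ I, c I • v I := by
            refine Finset.sum_congr rfl fun I _ => ?_
            simp only [hv, hsmul]
            rfl
    · calc x = ∑ I, y I • v I := hy
        @Eq (FrobTwist R p) _ (∑ I : Fin r → Fin p, (y I) ^ p * ∏ i, t i ^ (I i : ℕ)) := by
            refine Finset.sum_congr rfl fun I _ => ?_
            simp only [hv, hsmul]
            rfl
  -- `v` is an `R`-basis of `FrobTwist R p`.
  have hli : LinearIndependent R v := by
    rw [Fintype.linearIndependent_iff]
    intro g hg I
    obtain ⟨c, hc, hcu⟩ := hrep 0
    have h1 : g = c := hcu g hg.symm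
    have h2 : (0 : (Fin r → Fin p) → R) = c := hcu 0 (by simp)
    exact congrFun (h1.trans h2.symm) I
  have hsp : ⊤ ≤ Submodule.span R (Set.range v) := by
    intro x _
    obtain ⟨c, hc, -⟩ := hrep x
    rw [hc]
    exact Submodule.sum_mem _ fun I _ =>
      Submodule.smul_mem _ _ (Submodule.subset_span ⟨I, rfl⟩)
  let b : Module.Basis (Fin r → Fin p) R (FrobTwist R p) := Module.Basis.mk hli hsp
  have hb : ∀ I, b I = v I := fun I => Module.Basis.mk_apply hli hsp I
  let bT : Module.Basis (Fin r → Fin p) S (S ⊗[R] FrobTwist R p) := Algebra.TensorProduct.basis S b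
  have key : ∀ s : (Fin r → Fin p) → S,
      (∑ I, s I ⊗ₜ[R] v I : S ⊗[R] FrobTwist R p) = bT.equivFun.symm s := by
    intro s
    rw [Module.Basis.equivFun_symm_apply]
    refine Finset.sum_congr rfl fun I _ => ?_
    rw [show bT I = Algebra.TensorProduct.basis S b I from rfl,
      Algebra.TensorProduct.basis_repr_symm_apply', hb]
  constructor
  · constructor
    · intro φ ψ h
      dsimp only at h
      rw [key (fun I => φ (MvPolynomial.X I)), key (fun I => ψ (MvPolynomial.X I))] at h
      exact MvPolynomial.algHom_ext fun I =>
        congrFun (bT.equivFun.symm.injective h) I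
    · intro y
      refine ⟨MvPolynomial.aeval (bT.equivFun y), ?_⟩
      dsimp only
      rw [key]
      simp only [MvPolynomial.aeval_X]
      exact bT.equivFun.symm_apply_apply y
  · intro c
    simp [Algebra.smul_def, MvPolynomial.algebraMap_eq]
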